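/- Let D₁ and D₂ be nonnegative identically distributed real-valued random variables on a common probability space with common survival function S(x) := P(D₁ > x), satisfying S(x) > 0 for all x. Assume S is regularly varying at infinity with tail index α where 0 < α < 1, i.e. for every x > 0, S(sx)/S(s) → x^{−α} as s → ∞, and assume the joint tail is negligible relative to the marginal tail: P(D₁ > x, D₂ > x)/S(x) → 0 as x → ∞. Then there exists a threshold t₀ ∈ (0,1) such that for all t ∈ [t₀, 1), F_{D₁+D₂}⁻¹(t) > F_{D₁}⁻¹(t) + F_{D₂}⁻¹(t); that is, the pooling effect is positive for all margin ratios at or above t₀. -/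

import Mathlib

set_option maxHeartbeats 1000000

open MeasureTheory ProbabilityTheory Set Filter Topology

/-- The quantile function of a distribution on `ℝ`: `F⁻¹(t) = inf {x | t ≤ F(x)}`. -/
noncomputable def quantile (μ : Measure ℝ) (t : ℝ) : ℝ :=
  sInf {x : ℝ | t ≤ cdf μ x}

theorem pooling_effect_pos_of_regularly_varying {Ω : Type*} [MeasurableSpace Ω]
    (P : Measure Ω) [IsProbabilityMeasure P] (D₁ D₂ : Ω → ℝ)
    (hD₁ : Measurable D₁) (hD₂ : Measurable D₂)
    (hnn₁ : ∀ ω, 0 ≤ D₁ ω) (hnn₂ : ∀ ω, 0 ≤ D₂ ω)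
    (hid : Measure.map D₁ P = Measure.map D₂ P)
    (S : ℝ → ℝ) (hS : ∀ x, S x = (P {ω | x < D₁ ω}).toReal)
    (hSpos : ∀ x, 0 < S x)
    (α : ℝ) (hα0 : 0 < α) (hα1 : α < 1)
    (hreg : ∀ x > (0 : ℝ), Tendsto (fun s => S (s * x) / S s) atTop (𝓝 (x ^ (-α))))
    (hjoint : Tendsto (fun x => (P {ω | x < D₁ ω ∧ x < D₂ ω}).toReal / S x) atTop (𝓝 0)) :
    ∃ t₀ ∈ Set.Ioo (0 : ℝ) 1, ∀ t ∈ Set.Ico t₀ 1,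
      quantile (Measure.map D₁ P) t + quantile (Measure.map D₂ P) t <
        quantile (Measure.map (fun ω => D₁ ω + D₂ ω) P) t := by
  set μ₁ := Measure.map D₁ P with hμ₁
  set μs := Measure.map (fun ω => D₁ ω + D₂ ω) P with hμs
  haveI : IsProbabilityMeasure μ₁ := Measure.isProbabilityMeasure_map hD₁.aemeasurable
  haveI : IsProbabilityMeasure μs := Measure.isProbabilityMeasure_map (hD₁.add hD₂).aemeasurable
  -- basic cdf identities
  have hcompl : ∀ (A : Set Ω), MeasurableSet A → (P A).toReal + (P Aᶜ).toReal = 1 := by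
    intro A hA
    rw [← ENNReal.toReal_add (measure_ne_top _ _) (measure_ne_top _ _),
      measure_add_measure_compl hA]
    simp
  have hF : ∀ x, cdf μ₁ x + S x = 1 := by
    intro x
    rw [cdf_eq_real, measureReal_def, hμ₁, Measure.map_apply hD₁ measurableSet_Iic, hS x]
    have : D₁ ⁻¹' Iic x = {ω | D₁ ω ≤ x} := rfl
    rw [this]
    have h2 : {ω | x < D₁ ω} = {ω | D₁ ω ≤ x}ᶜ := by ext ω; simp
    rw [h2]
    exact hcompl _ (hD₁ measurableSet_Iic)
  have hFs : ∀ y, cdf μs y + (P {ω | y < D₁ ω + D₂ ω}).toReal = 1 := by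
    intro y
    rw [cdf_eq_real, measureReal_def, hμs, Measure.map_apply (f := fun ω => D₁ ω + D₂ ω) (hD₁.add hD₂) measurableSet_Iic]
    have : (fun ω => D₁ ω + D₂ ω) ⁻¹' Iic y = {ω | D₁ ω + D₂ ω ≤ y} := rfl
    rw [this]
    have h2 : {ω | y < D₁ ω + D₂ ω} = {ω | D₁ ω + D₂ ω ≤ y}ᶜ := by ext ω; simp
    rw [h2]
    exact hcompl _ ((hD₁.add hD₂) measurableSet_Iic)
  -- tail of D₂ equals S
  have hS₂ : ∀ x, (P {ω | x < D₂ ω}).toReal = S x := by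
    intro x
    have h1 : {ω | x < D₂ ω} = D₂ ⁻¹' Ioi x := rfl
    have h2 : {ω | x < D₁ ω} = D₁ ⁻¹' Ioi x := rfl
    rw [hS x, h1, h2, ← Measure.map_apply hD₂ measurableSet_Ioi,
      ← Measure.map_apply hD₁ measurableSet_Ioi, ← hid, hμ₁]
  -- union tail bound
  have hsum_tail : ∀ y, 2 * S y - (P {ω | y < D₁ ω ∧ y < D₂ ω}).toReal
      ≤ (P {ω | y < D₁ ω + D₂ ω}).toReal := by
    intro y
    set A := {ω | y < D₁ ω} with hA
    set B := {ω | y < D₂ ω} with hB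
    have hAm : MeasurableSet A := hD₁ measurableSet_Ioi
    have hBm : MeasurableSet B := hD₂ measurableSet_Ioi
    have hsub : A ∪ B ⊆ {ω | y < D₁ ω + D₂ ω} := by
      rintro ω (h | h)
      · exact lt_of_lt_of_le h (le_add_of_nonneg_right (hnn₂ ω))
      · exact lt_of_lt_of_le h (le_add_of_nonneg_left (hnn₁ ω))
    have hunion : P (A ∪ B) + P (A ∩ B) = P A + P B := measure_union_add_inter A hBm
    have hAB : A ∩ B = {ω | y < D₁ ω ∧ y < D₂ ω} := rfl
    have hle : P (A ∪ B) ≤ P {ω | y < D₁ ω + D₂ ω} := measure_mono hsub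
    have hle' : (P (A ∪ B)).toReal ≤ (P {ω | y < D₁ ω + D₂ ω}).toReal :=
      ENNReal.toReal_mono (measure_ne_top _ _) hle
    have hunion' : (P (A ∪ B)).toReal + (P (A ∩ B)).toReal = (P A).toReal + (P B).toReal := by
      rw [← ENNReal.toReal_add (measure_ne_top _ _) (measure_ne_top _ _), hunion,
        ENNReal.toReal_add (measure_ne_top _ _) (measure_ne_top _ _)]
    have h1 : (P A).toReal = S y := (hS y).symm
    have h2 : (P B).toReal = S y := hS₂ y
    rw [hAB] at hunion'
    nlinarith [hle', hunion']
  -- constants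
  set β := (1 + 1/α) / 2 with hβ
  have hβ1 : 1 < β := by
    have : 1 < 1/α := by rw [lt_div_iff₀ hα0]; linarith
    rw [hβ]; linarith
  have hβα : α * β < 1 := by
    rw [hβ]
    have h1 : α * ((1 + 1/α)/2) = (α + 1)/2 := by field_simp
    rw [h1]; linarith
  set c := (2:ℝ) ^ β with hc
  have hc2 : 2 < c := by
    have : (2:ℝ) ^ (1:ℝ) < 2 ^ β := (Real.rpow_lt_rpow_left_iff one_lt_two).mpr hβ1
    simpa using this
  have hc0 : (0:ℝ) < c := by linarith
  have hL : 1/2 < c ^ (-α) := by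
    rw [hc, ← Real.rpow_mul (by norm_num : (0:ℝ) ≤ 2)]
    have h12 : (1:ℝ)/2 = 2 ^ (-1:ℝ) := by rw [Real.rpow_neg_one]; norm_num
    rw [h12]
    exact (Real.rpow_lt_rpow_left_iff one_lt_two).mpr (by nlinarith)
  have hL1 : c ^ (-α) < 1 :=
    Real.rpow_lt_one_of_one_lt_of_neg (by linarith) (by linarith)
  set θ := (c ^ (-α) + 1/2) / 2 with hθdef
  have hθhalf : 1/2 < θ := by rw [hθdef]; linarith
  have hθL : θ < c ^ (-α) := by rw [hθdef]; linarith
  have hθ1 : θ < 1 := lt_trans hθL hL1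
  set η := (2*θ - 1)/2 with hη
  have hη0 : 0 < η := by rw [hη]; linarith
  have hkey : 1 < (2 - η) * θ := by nlinarith
  -- eventual bounds
  have hev1 : ∀ᶠ s in atTop, θ < S (s * c) / S s :=
    (hreg c hc0).eventually (eventually_gt_nhds hθL)
  have hev2 : ∀ᶠ x in atTop, (P {ω | x < D₁ ω ∧ x < D₂ ω}).toReal / S x < η :=
    hjoint.eventually (eventually_lt_nhds hη0)
  obtain ⟨M₁, hM₁⟩ := hev1.exists_forall_of_atTop
  obtain ⟨M₂, hM₂⟩ := hev2.exists_forall_of_atTop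
  set M := max (max M₁ M₂) 1 with hM
  have hM1 : (1:ℝ) ≤ M := le_max_right _ _
  -- main tail estimate
  have hmain : ∀ s, M ≤ s → S s < (P {ω | s * c < D₁ ω + D₂ ω}).toReal := by
    intro s hs
    have hs1 : (1:ℝ) ≤ s := le_trans hM1 hs
    have hsM₁ : M₁ ≤ s := le_trans (le_trans (le_max_left _ _) (le_max_left _ _)) hs
    have hsc : M₂ ≤ s * c := by
      have : s ≤ s * c := le_mul_of_one_le_right (by linarith) (by linarith)
      have h2 : M₂ ≤ s := le_trans (le_trans (le_max_right _ _) (le_max_left _ _)) hs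
      linarith
    have h1 : θ < S (s * c) / S s := hM₁ s hsM₁
    have h2 : (P {ω | s*c < D₁ ω ∧ s*c < D₂ ω}).toReal / S (s*c) < η := hM₂ _ hsc
    have hSs := hSpos s
    have hSsc := hSpos (s*c)
    have h1' : θ * S s < S (s * c) := by
      rw [lt_div_iff₀ hSs] at h1; linarith
    have h2' : (P {ω | s*c < D₁ ω ∧ s*c < D₂ ω}).toReal < η * S (s*c) := by
      rw [div_lt_iff₀ hSsc] at h2; linarith
    have h3 := hsum_tail (s*c)
    nlinarith
  -- threshold
  set t₀ := (cdf μ₁ (M+1) + 1) / 2 with ht₀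
  have hFM1 : cdf μ₁ (M+1) < 1 := by
    have := hF (M+1); have := hSpos (M+1); linarith
  have hFM0 : 0 ≤ cdf μ₁ (M+1) := cdf_nonneg _ _
  refine ⟨t₀, ⟨by rw [ht₀]; linarith, by rw [ht₀]; linarith⟩, ?_⟩
  rintro t ⟨htl, htr⟩
  have htF : cdf μ₁ (M+1) < t := by rw [ht₀] at htl; linarith
  have ht0 : 0 < t := lt_of_lt_of_le (by rw [ht₀]; linarith) htl
  set q := quantile μ₁ t with hq
  -- nonemptiness of the quantile sets
  have hne1 : {x : ℝ | t ≤ cdf μ₁ x}.Nonempty := by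
    have := (tendsto_cdf_atTop μ₁).eventually (eventually_ge_nhds htr)
    obtain ⟨x, hx⟩ := this.exists
    exact ⟨x, hx⟩
  have hnes : {x : ℝ | t ≤ cdf μs x}.Nonempty := by
    have := (tendsto_cdf_atTop μs).eventually (eventually_ge_nhds htr)
    obtain ⟨x, hx⟩ := this.exists
    exact ⟨x, hx⟩
  have hqM : M + 1 ≤ q := by
    apply le_csInf hne1
    intro x hx
    by_contra hxc
    push_neg at hxc
    have : cdf μ₁ x ≤ cdf μ₁ (M+1) := monotone_cdf _ (le_of_lt hxc)
    have : t ≤ cdf μ₁ (M+1) := le_trans hx this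
    linarith
  -- cdf of sum below t on [M*c, q*c)
  have hcdfs : ∀ x, M ≤ x → x < q → cdf μs (x * c) < t := by
    intro x hxM hxq
    have hxt : cdf μ₁ x < t := by
      by_contra hcon
      push_neg at hcon
      have : q ≤ x := csInf_le ⟨M+1, by
        intro y hy
        by_contra hyc
        push_neg at hyc
        have h1 : cdf μ₁ y ≤ cdf μ₁ (M+1) := monotone_cdf _ (le_of_lt hyc)
        have := le_trans hy h1
        linarith⟩ hcon
      linarith
    have hSx : 1 - t < S x := by have := hF x; linarith
    have htail := hmain x hxM
    have := hFs (x * c)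
    linarith
  -- quantile of sum ≥ q * c
  have hqs : q * c ≤ quantile μs t := by
    apply le_csInf hnes
    intro y hy
    by_contra hyc
    push_neg at hyc
    set x := max M (y / c) with hx
    have hxM : M ≤ x := le_max_left _ _
    have hxq : x < q := by
      apply max_lt (by linarith)
      rw [div_lt_iff₀ hc0]; linarith [hyc]
    have hyx : y ≤ x * c := by
      have : y / c ≤ x := le_max_right _ _
      rw [div_le_iff₀ hc0] at this; linarith
    have h1 : cdf μs y ≤ cdf μs (x * c) := monotone_cdf _ hyx
    have h2 := hcdfs x hxM hxq
    have := le_trans hy h1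
    linarith
  -- conclude
  have hq2 : quantile (Measure.map D₂ P) t = q := by rw [← hid]
  rw [hq2]
  have hq0 : 0 < q := by linarith
  have hqq : q * 2 < q * c := mul_lt_mul_of_pos_left hc2 hq0
  linarith
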